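/- Let G be a static digraph on n vertices with s,t∈V, let x_ℓ denote the number of simple (s,t)-paths of length ℓ in G, and for τ∈{1,...,n−1} let y_τ denote the number of temporal (s,z)-paths of length at most τ+1 in the temporal graph G_τ (the τ-layer blow-up with an appended edge (t,z,n,1)). Then y_τ = Σ_{ℓ=1}^{τ} C(τ,ℓ)·x_ℓ, and consequently the numbers x_1,...,x_{n−1}, and hence the total number of simple (s,t)-paths Σ_ℓ x_ℓ, are determined from y_1,...,y_{n−1} by the recurrence x_τ = y_τ − Σ_{i=1}^{τ−1} C(τ,i)·x_i. -/

import Mathlib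

/-- A weighted temporal edge: source, destination, availability time,
traversal time, and real cost. -/
structure TEdge (V : Type) where
  src : V
  dst : V
  time : ℕ
  lam : ℕ
  cost : ℝ

variable {V : Type}

/-- Temporal compatibility of consecutive edges. -/
def TEdge.Compat (e f : TEdge V) : Prop := e.dst = f.src ∧ e.time + e.lam ≤ f.time

/-- A temporal (s,z)-walk in the edge set `E`. -/
def IsWalk (E : Set (TEdge V)) (s z : V) (P : List (TEdge V)) : Prop :=
  P ≠ [] ∧ (∀ e ∈ P, e ∈ E) ∧ P.Chain' TEdge.Compat ∧
  (∀ e, P.head? = some e → e.src = s) ∧ (∀ e, P.getLast? = some e → e.dst = z)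

/-- The sequence of vertices visited by a walk. -/
def visitedVerts (P : List (TEdge V)) : List V :=
  (P.head?.elim [] fun e => [e.src]) ++ P.map TEdge.dst

/-- A temporal path: a simple temporal walk. -/
def IsPath (E : Set (TEdge V)) (s z : V) (P : List (TEdge V)) : Prop :=
  IsWalk E s z P ∧ (visitedVerts P).Nodup

/-- Cost of a walk. -/
noncomputable def wcost (P : List (TEdge V)) : ℝ := (P.map TEdge.cost).sum

/-- Arrival time of a walk. -/
def warr (P : List (TEdge V)) : ℕ := P.getLast?.elim 0 fun e => e.time + e.lam

/-- Starting time of a walk. -/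
def wstart (P : List (TEdge V)) : ℕ := P.head?.elim 0 fun e => e.time

/-- Duration of a walk. -/
def wdur (P : List (TEdge V)) : ℕ := warr P - wstart P

/-- `Q` dominates `P` w.r.t. cost and the temporal objective `f`. -/
def Dominates (f : List (TEdge V) → ℕ) (Q P : List (TEdge V)) : Prop :=
  (wcost Q < wcost P ∧ f Q ≤ f P) ∨ (wcost Q ≤ wcost P ∧ f Q < f P)

/-- `P` is efficient within the set `X` w.r.t. cost and objective `f`. -/
def EfficientIn (X : Set (List (TEdge V))) (f : List (TEdge V) → ℕ) (P : List (TEdge V)) : Prop :=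
  P ∈ X ∧ ∀ Q ∈ X, ¬ Dominates f Q P

/-- A simple path in a static digraph, as a nonempty duplicate-free list of
vertices from `s` to `t` along edges of `Eg`. -/
def SIsPath (Eg : Set (V × V)) (s t : V) (p : List V) : Prop :=
  p ≠ [] ∧ p.Chain' (fun a b => (a, b) ∈ Eg) ∧ p.Nodup ∧
  (∀ a, p.head? = some a → a = s) ∧ (∀ a, p.getLast? = some a → a = t)

section Stmt15Aux

open List

/-- The edge set of the τ-layer temporal blow-up. -/
def ETau (Eg : Set (V × V)) (t : V) (n τ : ℕ) : Set (TEdge (Option V)) :=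
  {e | ∃ u v i, (u, v) ∈ Eg ∧ 1 ≤ i ∧ i ≤ τ ∧ e = ⟨some u, some v, i, 1, 0⟩} ∪
    {⟨some t, none, n, 1, 0⟩}

/-- Build the temporal path associated to a static path and a list of times. -/
def mkT (n : ℕ) : List V → List ℕ → List (TEdge (Option V))
  | [], _ => []
  | [a], _ => [⟨some a, none, n, 1, 0⟩]
  | _ :: _ :: _, [] => []
  | a :: b :: p, i :: ts => ⟨some a, some b, i, 1, 0⟩ :: mkT n (b :: p) ts

theorem mkT_length (n : ℕ) : ∀ (p : List V) (ts : List ℕ), p.length = ts.length + 1 →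
    (mkT n p ts).length = p.length
  | [], _, h => by simp at h
  | [a], [], _ => rfl
  | [a], _ :: _, h => by simp at h
  | _ :: _ :: _, [], h => by simp at h
  | a :: b :: p, i :: ts, h => by
      simp only [mkT, length_cons]
      rw [mkT_length n (b :: p) ts (by simpa using h)]
      simp

theorem mkT_map_dst (n : ℕ) : ∀ (p : List V) (ts : List ℕ), p.length = ts.length + 1 →
    (mkT n p ts).map TEdge.dst = p.tail.map some ++ [none]
  | [], _, h => by simp at h
  | [a], [], _ => rfl
  | [a], _ :: _, h => by simp at h
  | _ :: _ :: _, [], h => by simp at h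
  | a :: b :: p, i :: ts, h => by
      simp only [mkT, map_cons, tail_cons]
      rw [mkT_map_dst n (b :: p) ts (by simpa using h)]
      rfl

theorem mkT_head (n : ℕ) : ∀ (p : List V) (ts : List ℕ) (a : V), p.length = ts.length + 1 →
    p.head? = some a →
    ∃ e, (mkT n p ts).head? = some e ∧ e.src = some a ∧ e.time = ts.headD n ∧ e.lam = 1
  | [], _, a, h, _ => by simp at h
  | [a'], [], a, _, ha => by
      refine ⟨⟨some a', none, n, 1, 0⟩, rfl, ?_, rfl, rfl⟩
      simp_all
  | [a'], _ :: _, a, h, _ => by simp at h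
  | _ :: _ :: _, [], a, h, _ => by simp at h
  | a' :: b :: p, i :: ts, a, h, ha => by
      refine ⟨⟨some a', some b, i, 1, 0⟩, rfl, ?_, rfl, rfl⟩
      simp_all

theorem visited_mkT (n : ℕ) (p : List V) (ts : List ℕ) (h : p.length = ts.length + 1) :
    visitedVerts (mkT n p ts) = p.map some ++ [none] := by
  match p, ts with
  | [], _ => simp at h
  | a :: p', ts =>
    obtain ⟨e, he, hsrc, -, -⟩ := mkT_head n (a :: p') ts a h rfl
    rw [visitedVerts, he, mkT_map_dst n _ _ h]
    simp [hsrc]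

theorem mkT_getLast (n : ℕ) : ∀ (p : List V) (ts : List ℕ), p.length = ts.length + 1 →
    ∀ e, (mkT n p ts).getLast? = some e → e.dst = none
  | [], _, h => by simp at h
  | [a], [], _ => by intro e he; simp [mkT] at he; simp [← he]
  | [a], _ :: _, h => by simp at h
  | _ :: _ :: _, [], h => by simp at h
  | a :: b :: p, i :: ts, h => by
      intro e he
      have h' : (b :: p).length = ts.length + 1 := by simpa using h
      have hne : mkT n (b :: p) ts ≠ [] := by
        intro hc
        have := mkT_length n (b :: p) ts h'
        rw [hc] at this
        simp at this
      apply mkT_getLast n (b :: p) ts h' e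
      cases hM : mkT n (b :: p) ts with
      | nil => exact absurd hM hne
      | cons c M' =>
        rw [mkT, hM, List.getLast?_cons_cons] at he
        exact he

theorem mkT_chain (n τ : ℕ) (hn : τ + 1 ≤ n) : ∀ (p : List V) (ts : List ℕ),
    p.length = ts.length + 1 → ts.Chain' (· < ·) → (∀ i ∈ ts, i ≤ τ) →
    (mkT n p ts).Chain' TEdge.Compat
  | [], _, h, _, _ => by simp at h
  | [a], [], _, _, _ => by simp [mkT, List.Chain', List.isChain_singleton]
  | [a], _ :: _, h, _, _ => by simp at h
  | _ :: _ :: _, [], h, _, _ => by simp at h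
  | a :: b :: p, i :: ts, h, hc, hb => by
      have h' : (b :: p).length = ts.length + 1 := by simpa using h
      rw [mkT, List.Chain', List.isChain_cons]
      refine ⟨?_, mkT_chain n τ hn (b :: p) ts h' hc.tail fun j hj => hb j (mem_cons_of_mem _ hj)⟩
      intro y hy
      obtain ⟨e, he, hsrc, htime, -⟩ := mkT_head n (b :: p) ts b h' rfl
      rw [he] at hy
      cases hy
      refine ⟨hsrc.symm, ?_⟩
      show i + 1 ≤ y.time
      rw [htime]
      cases ts with
      | nil =>
        have : i ≤ τ := hb i (by simp)
        simpa using (le_trans (by omega : i + 1 ≤ τ + 1) hn : i + 1 ≤ n)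
      | cons j ts' =>
        have : i < j := (List.isChain_cons_cons.1 hc).1
        simpa using this

theorem mkT_mem (Eg : Set (V × V)) (t : V) (n τ : ℕ) : ∀ (p : List V) (ts : List ℕ),
    p.length = ts.length + 1 → p.Chain' (fun a b => (a, b) ∈ Eg) →
    (∀ v, p.getLast? = some v → v = t) → (∀ i ∈ ts, 1 ≤ i ∧ i ≤ τ) →
    ∀ e ∈ mkT n p ts, e ∈ ETau Eg t n τ
  | [], _, h, _, _, _ => by simp at h
  | [a], [], _, _, hl, _ => by
      intro e he
      simp only [mkT, mem_singleton] at he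
      right
      have : a = t := hl a rfl
      simp [he, this, ETau]
  | [a], _ :: _, h, _, _, _ => by simp at h
  | _ :: _ :: _, [], h, _, _, _ => by simp at h
  | a :: b :: p, i :: ts, h, hc, hl, hb => by
      intro e he
      rw [mkT, mem_cons] at he
      rcases he with he | he
      · left
        exact ⟨a, b, i, (List.isChain_cons_cons.1 hc).1, (hb i (by simp)).1, (hb i (by simp)).2, he⟩
      · exact mkT_mem Eg t n τ (b :: p) ts (by simpa using h) (List.isChain_cons_cons.1 hc).2
          (fun v hv => hl v (by rw [List.getLast?_cons_cons]; exact hv))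
          (fun j hj => hb j (mem_cons_of_mem _ hj)) e he

end Stmt15Aux
section Stmt15Aux2

open List

theorem mkT_inj (n : ℕ) : ∀ (p : List V) (ts : List ℕ) (p' : List V) (ts' : List ℕ),
    p.length = ts.length + 1 → p'.length = ts'.length + 1 →
    mkT n p ts = mkT n p' ts' → p = p' ∧ ts = ts' := by
  intro p
  induction p with
  | nil => intro ts p' ts' h; simp at h
  | cons a q IH =>
    intro ts p' ts' h h' heq
    cases q with
    | nil =>
      cases ts with
      | cons i ts₀ => simp at h
      | nil =>
        cases p' with
        | nil => simp at h'
        | cons a' q' =>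
          cases q' with
          | nil =>
            cases ts' with
            | cons i' ts₀ => simp at h'
            | nil => simp only [mkT, cons.injEq, TEdge.mk.injEq, Option.some.injEq] at heq
                     simp [heq.1.1]
          | cons b' q'' =>
            cases ts' with
            | nil => simp at h'
            | cons i' ts'' =>
              simp only [mkT, cons.injEq, TEdge.mk.injEq] at heq
              exact absurd heq.1.2.1 (by simp)
    | cons b q' =>
      cases ts with
      | nil => simp at h
      | cons i ts₀ =>
        cases p' with
        | nil => simp at h'
        | cons a' q'' =>
          cases q'' with
          | nil =>
            cases ts' with
            | cons i' ts''' => simp at h'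
            | nil =>
              simp only [mkT, cons.injEq, TEdge.mk.injEq] at heq
              exact absurd heq.1.2.1 (by simp)
          | cons b'' q''' =>
            cases ts' with
            | nil => simp at h'
            | cons i' ts'' =>
              simp only [mkT, cons.injEq, TEdge.mk.injEq, Option.some.injEq] at heq
              obtain ⟨⟨ha, hb, hi, -, -⟩, hrest⟩ := heq
              obtain ⟨hp, hts⟩ := IH ts₀ (b'' :: q''') ts'' (by simpa using h)
                (by simpa using h') (by rw [hb] at hrest ⊢; exact hrest)
              constructor
              · rw [ha, ← hp, hb]
              · rw [hi, hts]

theorem decomp (Eg : Set (V × V)) (t : V) (n τ : ℕ) :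
    ∀ (P : List (TEdge (Option V))) (a : V),
    (∀ e ∈ P, e ∈ ETau Eg t n τ) → P.Chain' TEdge.Compat →
    (∀ e, P.head? = some e → e.src = some a) →
    (∀ e, P.getLast? = some e → e.dst = none) →
    P ≠ [] →
    ∃ p ts, p.head? = some a ∧ (∀ v, p.getLast? = some v → v = t) ∧
      p.Chain' (fun u v => (u, v) ∈ Eg) ∧ ts.Chain' (· < ·) ∧
      (∀ i ∈ ts, 1 ≤ i ∧ i ≤ τ) ∧ p.length = ts.length + 1 ∧
      (∀ e, P.head? = some e → e.time = ts.headD n) ∧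
      P = mkT n p ts := by
  intro P
  induction P with
  | nil => intro a _ _ _ _ h; exact absurd rfl h
  | cons e P' IH =>
    intro a hmem hch hhd hlst _
    have hesrc : e.src = some a := hhd e rfl
    rcases hmem e (by simp) with ⟨u, v, i, huv, hi1, hiτ, he⟩ | he
    · -- regular edge
      subst he
      have hau : u = a := by simpa using hesrc
      subst hau
      cases P' with
      | nil =>
        have : (⟨some u, some v, i, 1, 0⟩ : TEdge (Option V)).dst = none := hlst _ rfl
        simp at this
      | cons f P'' =>
        obtain ⟨hcomp, hch'⟩ := List.isChain_cons_cons.1 hch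
        obtain ⟨hdst, htime⟩ := hcomp
        obtain ⟨p, ts, hp_hd, hp_lst, hp_ch, hts_ch, hts_b, hlen, hhdtime, hPeq⟩ :=
          IH v (fun e' he' => hmem e' (mem_cons_of_mem _ he'))
            hch' (fun e' he' => by cases he'; exact hdst.symm)
            (fun e' he' => hlst e' (by rw [List.getLast?_cons_cons]; exact he'))
            (by simp)
        cases p with
        | nil => simp at hp_hd
        | cons v' p'' =>
          have hv : v' = v := by simpa using hp_hd
          subst hv
          refine ⟨u :: v' :: p'', i :: ts, rfl, ?_, ?_, ?_, ?_, by simpa using hlen, ?_, ?_⟩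
          · intro w hw
            exact hp_lst w (by rw [List.getLast?_cons_cons] at hw; exact hw)
          · exact List.isChain_cons_cons.2 ⟨huv, hp_ch⟩
          · refine List.isChain_cons.2 ⟨?_, hts_ch⟩
            intro j hj
            cases ts with
            | nil => simp at hj
            | cons j' ts'' =>
              have h1 : f.time = j' := by simpa using hhdtime f rfl
              have h2 : j = j' := (by simpa using hj : j' = j).symm
              have : i + 1 ≤ f.time := htime
              omega
          · intro j hj
            rcases mem_cons.1 hj with rfl | hj
            · exact ⟨hi1, hiτ⟩
            · exact hts_b j hj
          · intro e' he'
            cases he'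
            rfl
          · rw [mkT, ← hPeq]
    · -- special edge
      have he' : e = ⟨some t, none, n, 1, 0⟩ := he
      subst he'
      have hat : t = a := by simpa using hesrc
      subst hat
      cases P' with
      | nil =>
        refine ⟨[t], [], rfl, ?_, ?_, ?_, by simp, rfl, ?_, rfl⟩
        · intro v hv; simpa using hv.symm
        · simp [List.Chain', List.isChain_singleton]
        · simp [List.Chain', List.isChain_nil]
        · intro e' he'; cases he'; rfl
      | cons f P'' =>
        obtain ⟨hcomp, -⟩ := List.isChain_cons_cons.1 hch
        have hdst : (none : Option V) = f.src := hcomp.1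
        rcases hmem f (by simp) with ⟨u', v', i', -, -, -, hf⟩ | hf
        · rw [hf] at hdst; simp at hdst
        · have : f = ⟨some t, none, n, 1, 0⟩ := hf
          rw [this] at hdst; simp at hdst

theorem ncard_biUnion_sum {α ι : Type*} (s : Finset ι) (f : ι → Set α)
    (hfin : ∀ i ∈ s, (f i).Finite)
    (hdisj : ∀ i ∈ s, ∀ j ∈ s, i ≠ j → Disjoint (f i) (f j)) :
    (⋃ i ∈ s, f i).ncard = ∑ i ∈ s, (f i).ncard := by
  classical
  induction s using Finset.induction_on with
  | empty => simp
  | @insert a s ha IH =>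
    have hdis : Disjoint (f a) (⋃ i ∈ s, f i) := by
      simp only [Set.disjoint_iUnion_right]
      intro i hi
      exact hdisj a (by simp) i (by simp [hi]) (by rintro rfl; exact ha hi)
    have hfin2 : (⋃ i ∈ s, f i).Finite :=
      Set.Finite.biUnion s.finite_toSet (fun i hi => hfin i (Finset.mem_insert_of_mem (by simpa using hi)))
    rw [Finset.set_biUnion_insert, Finset.sum_insert ha,
      Set.ncard_union_eq hdis (hfin a (by simp)) hfin2,
      IH (fun i hi => hfin i (by simp [hi]))
        (fun i hi j hj hij => hdisj i (by simp [hi]) j (by simp [hj]) hij)]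

theorem ncard_prod' {α β : Type*} (s : Set α) (t : Set β) :
    (s ×ˢ t).ncard = s.ncard * t.ncard := by
  rw [← Nat.card_coe_set_eq, ← Nat.card_coe_set_eq, ← Nat.card_coe_set_eq,
    Nat.card_congr (Equiv.Set.prod s t), Nat.card_prod]

theorem W_eq (τ ℓ : ℕ) :
    {ts : List ℕ | ts.Chain' (· < ·) ∧ (∀ i ∈ ts, 1 ≤ i ∧ i ≤ τ) ∧ ts.length = ℓ} =
      (fun A : Finset ℕ => A.sort (· ≤ ·)) '' ((Finset.Icc 1 τ).powersetCard ℓ : Set (Finset ℕ)) := by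
  ext ts
  simp only [Set.mem_setOf_eq, Set.mem_image, Finset.mem_coe, Finset.mem_powersetCard]
  constructor
  · rintro ⟨hc, hb, hl⟩
    have hpw : ts.Pairwise (· < ·) := List.isChain_iff_pairwise.1 hc
    have hnd : ts.Nodup := hpw.nodup
    refine ⟨ts.toFinset, ⟨?_, ?_⟩, ?_⟩
    · intro i hi
      rw [List.mem_toFinset] at hi
      rw [Finset.mem_Icc]
      exact ⟨(hb i hi).1, (hb i hi).2⟩
    · rw [List.toFinset_card_of_nodup hnd, hl]
    · exact (List.toFinset_sort (· ≤ ·) hnd).2 (hpw.imp le_of_lt)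
  · rintro ⟨A, ⟨hsub, hcard⟩, rfl⟩
    refine ⟨List.isChain_iff_pairwise.2 (List.sortedLT_iff_pairwise.1 A.sortedLT_sort), ?_, by simp [hcard]⟩
    intro i hi
    have := hsub (by rwa [Finset.mem_sort] at hi)
    rw [Finset.mem_Icc] at this
    exact this

theorem W_ncard (τ ℓ : ℕ) :
    {ts : List ℕ | ts.Chain' (· < ·) ∧ (∀ i ∈ ts, 1 ≤ i ∧ i ≤ τ) ∧ ts.length = ℓ}.ncard
      = τ.choose ℓ := by
  rw [W_eq]
  rw [Set.ncard_image_of_injOn ?inj, Set.ncard_coe_finset, Finset.card_powersetCard, Nat.card_Icc]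
  · norm_num
  case inj =>
    intro A _ B _ h
    have := congrArg List.toFinset h
    rwa [Finset.sort_toFinset, Finset.sort_toFinset] at this

theorem W_finite (τ ℓ : ℕ) :
    {ts : List ℕ | ts.Chain' (· < ·) ∧ (∀ i ∈ ts, 1 ≤ i ∧ i ≤ τ) ∧ ts.length = ℓ}.Finite := by
  rw [W_eq]
  exact (Finset.finite_toSet _).image _

end Stmt15Aux2
section Stmt15Aux3

open List

theorem Y_eq (Eg : Set (V × V)) (s t : V) (n τ ℓ : ℕ) (hτn : τ + 1 ≤ n) :
    {P : List (TEdge (Option V)) | IsPath (ETau Eg t n τ) (some s) none P ∧ P.length = ℓ + 1} =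
      (fun q : List V × List ℕ => mkT n q.1 q.2) ''
        ({p : List V | SIsPath Eg s t p ∧ p.length = ℓ + 1} ×ˢ
          {ts : List ℕ | ts.Chain' (· < ·) ∧ (∀ i ∈ ts, 1 ≤ i ∧ i ≤ τ) ∧ ts.length = ℓ}) := by
  ext P
  simp only [Set.mem_setOf_eq, Set.mem_image, Set.mem_prod, Prod.exists]
  constructor
  · rintro ⟨⟨⟨hne, hmem, hch, hhd, hlst⟩, hnd⟩, hlen⟩
    obtain ⟨p, ts, hp_hd, hp_lst, hp_ch, hts_ch, hts_b, hlenp, -, rfl⟩ :=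
      decomp Eg t n τ P s hmem hch hhd hlst hne
    have hPlen : (mkT n p ts).length = p.length := mkT_length n p ts hlenp
    have hpl : p.length = ℓ + 1 := by rw [← hPlen, hlen]
    have hnd' : p.Nodup := by
      rw [visited_mkT n p ts hlenp] at hnd
      exact ((List.nodup_append.1 hnd).1).of_map some
    refine ⟨p, ts, ⟨⟨⟨?_, hp_ch, hnd', ?_, hp_lst⟩, hpl⟩, hts_ch, hts_b, by omega⟩, rfl⟩
    · intro hc; rw [hc] at hp_hd; simp at hp_hd
    · intro a ha; rw [hp_hd] at ha; exact (Option.some.injEq _ _ ▸ ha).symm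
  · rintro ⟨p, ts, ⟨⟨⟨hpne, hp_ch, hp_nd, hp_hd, hp_lst⟩, hpl⟩, hts_ch, hts_b, htsl⟩, rfl⟩
    have hlenp : p.length = ts.length + 1 := by omega
    have hPlen : (mkT n p ts).length = p.length := mkT_length n p ts hlenp
    have hhds : p.head? = some s := by
      cases p with
      | nil => exact absurd rfl hpne
      | cons a p' => simp [hp_hd a rfl]
    refine ⟨⟨⟨?_, ?_, ?_, ?_, mkT_getLast n p ts hlenp⟩, ?_⟩, by omega⟩
    · intro hc
      have := hPlen
      rw [hc] at this
      simp [hpl] at this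
    · exact mkT_mem Eg t n τ p ts hlenp hp_ch hp_lst hts_b
    · exact mkT_chain n τ hτn p ts hlenp hts_ch (fun i hi => (hts_b i hi).2)
    · intro e he
      obtain ⟨e', he', hsrc, -, -⟩ := mkT_head n p ts s hlenp hhds
      rw [he] at he'
      injection he' with h
      exact h ▸ hsrc
    · rw [visited_mkT n p ts hlenp]
      rw [List.nodup_append]
      refine ⟨hp_nd.map (Option.some_injective V), by simp, ?_⟩
      intro a ha
      simp only [List.mem_map] at ha
      obtain ⟨b, -, rfl⟩ := ha
      simp

theorem Y_ncard (Eg : Set (V × V)) (s t : V) (n τ ℓ : ℕ) (hτn : τ + 1 ≤ n) :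
    {P : List (TEdge (Option V)) | IsPath (ETau Eg t n τ) (some s) none P ∧
        P.length = ℓ + 1}.ncard
      = τ.choose ℓ * {p : List V | SIsPath Eg s t p ∧ p.length = ℓ + 1}.ncard := by
  rw [Y_eq Eg s t n τ ℓ hτn, Set.ncard_image_of_injOn ?inj, ncard_prod', W_ncard, Nat.mul_comm]
  case inj =>
    rintro ⟨p, ts⟩ ⟨⟨-, hpl⟩, ⟨-, -, htsl⟩⟩ ⟨p', ts'⟩ ⟨⟨-, hpl'⟩, ⟨-, -, htsl'⟩⟩ heq
    obtain ⟨h1, h2⟩ := mkT_inj n p ts p' ts'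
      (show (p, ts).1.length = (p, ts).2.length + 1 by rw [hpl, htsl])
      (show (p', ts').1.length = (p', ts').2.length + 1 by rw [hpl', htsl']) heq
    simp [h1, h2]

theorem Y_finite [Fintype V] (Eg : Set (V × V)) (s t : V) (n τ ℓ : ℕ) (hτn : τ + 1 ≤ n) :
    {P : List (TEdge (Option V)) | IsPath (ETau Eg t n τ) (some s) none P ∧
        P.length = ℓ + 1}.Finite := by
  rw [Y_eq Eg s t n τ ℓ hτn]
  exact (((List.finite_length_eq V (ℓ + 1)).subset fun p hp => hp.2).prod (W_finite τ ℓ)).image _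

theorem two_le_sislength (Eg : Set (V × V)) (s t : V) (hst : s ≠ t) (p : List V)
    (hp : SIsPath Eg s t p) : 2 ≤ p.length := by
  obtain ⟨hne, -, -, hhd, hlst⟩ := hp
  cases p with
  | nil => exact absurd rfl hne
  | cons a p' =>
    cases p' with
    | nil =>
      have h1 : a = s := hhd a rfl
      have h2 : a = t := hlst a rfl
      exact absurd (h1 ▸ h2) hst
    | cons b p'' => simp
      
theorem two_le_length (Eg : Set (V × V)) (s t : V) (hst : s ≠ t) (n τ : ℕ)
    (P : List (TEdge (Option V))) (hP : IsPath (ETau Eg t n τ) (some s) none P) :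
    2 ≤ P.length := by
  obtain ⟨⟨hne, hmem, hch, hhd, hlst⟩, -⟩ := hP
  obtain ⟨p, ts, hp_hd, hp_lst, -, -, -, hlenp, -, rfl⟩ :=
    decomp Eg t n τ P s hmem hch hhd hlst hne
  rw [mkT_length n p ts hlenp]
  cases p with
  | nil => simp at hp_hd
  | cons a p' =>
    cases p' with
    | nil =>
      have h1 : a = s := by simpa using hp_hd
      have h2 : a = t := hp_lst a rfl
      exact absurd (h1 ▸ h2) hst
    | cons b p'' => simp

theorem main_count [Fintype V] (Eg : Set (V × V)) (s t : V) (hst : s ≠ t) (n τ : ℕ)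
    (hτ1 : 1 ≤ τ) (hτn : τ + 1 ≤ n) :
    {P : List (TEdge (Option V)) | IsPath (ETau Eg t n τ) (some s) none P ∧
        P.length ≤ τ + 1}.ncard
      = ∑ ℓ ∈ Finset.Icc 1 τ,
          τ.choose ℓ * {p : List V | SIsPath Eg s t p ∧ p.length = ℓ + 1}.ncard := by
  have hun : {P : List (TEdge (Option V)) | IsPath (ETau Eg t n τ) (some s) none P ∧
      P.length ≤ τ + 1} = ⋃ ℓ ∈ Finset.Icc 1 τ,
      {P : List (TEdge (Option V)) | IsPath (ETau Eg t n τ) (some s) none P ∧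
        P.length = ℓ + 1} := by
    ext P
    simp only [Set.mem_setOf_eq, Set.mem_iUnion, Finset.mem_Icc, exists_prop]
    constructor
    · rintro ⟨hP, hlen⟩
      have h2 := two_le_length Eg s t hst n τ P hP
      exact ⟨P.length - 1, ⟨by omega, by omega⟩, hP, by omega⟩
    · rintro ⟨ℓ, ⟨-, h2⟩, hP, hl⟩
      exact ⟨hP, by omega⟩
  rw [hun, ncard_biUnion_sum _ _ (fun ℓ _ => Y_finite Eg s t n τ ℓ hτn) ?disj]
  · exact Finset.sum_congr rfl fun ℓ _ => Y_ncard Eg s t n τ ℓ hτn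
  case disj =>
    intro i _ j _ hij
    rw [Set.disjoint_left]
    rintro P ⟨-, h1⟩ ⟨-, h2⟩
    exact hij (by omega)

theorem static_count [Fintype V] (Eg : Set (V × V)) (s t : V) (hst : s ≠ t) :
    {p : List V | SIsPath Eg s t p}.ncard
      = ∑ ℓ ∈ Finset.Icc 1 (Fintype.card V - 1),
          {p : List V | SIsPath Eg s t p ∧ p.length = ℓ + 1}.ncard := by
  have hun : {p : List V | SIsPath Eg s t p} = ⋃ ℓ ∈ Finset.Icc 1 (Fintype.card V - 1),
      {p : List V | SIsPath Eg s t p ∧ p.length = ℓ + 1} := by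
    ext p
    simp only [Set.mem_setOf_eq, Set.mem_iUnion, Finset.mem_Icc, exists_prop]
    constructor
    · intro hp
      have h2 := two_le_sislength Eg s t hst p hp
      have hle : p.length ≤ Fintype.card V := hp.2.2.1.length_le_card
      exact ⟨p.length - 1, ⟨by omega, by omega⟩, hp, by omega⟩
    · rintro ⟨ℓ, -, hp, -⟩
      exact hp
  rw [hun, ncard_biUnion_sum _ _
    (fun ℓ _ => (List.finite_length_eq V (ℓ + 1)).subset fun p hp => hp.2) ?disj]
  case disj =>
    intro i _ j _ hij
    rw [Set.disjoint_left]
    rintro p ⟨-, h1⟩ ⟨-, h2⟩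
    exact hij (by omega)

end Stmt15Aux3
/-- with x_ℓ the number of simple static (s,t)-paths of length ℓ
and y_τ the number of temporal (s,z)-paths of length ≤ τ+1 in the τ-layer
blow-up G_τ (with appended edge (t,z,n,1)), one has
y_τ = Σ_{ℓ=1}^{τ} C(τ,ℓ)·x_ℓ, hence x_τ = y_τ − Σ_{i=1}^{τ-1} C(τ,i)·x_i, and
Σ_ℓ x_ℓ is the total number of simple (s,t)-paths. -/
theorem stmt15 [Fintype V] (Eg : Set (V × V)) (s t : V) (hst : s ≠ t) :
    let n := Fintype.card V
    let Eτ : ℕ → Set (TEdge (Option V)) := fun τ =>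
      {e | ∃ u v i, (u, v) ∈ Eg ∧ 1 ≤ i ∧ i ≤ τ ∧
            e = ⟨some u, some v, i, 1, 0⟩} ∪ {⟨some t, none, n, 1, 0⟩}
    let x : ℕ → ℕ := fun ℓ =>
      {p : List V | SIsPath Eg s t p ∧ p.length = ℓ + 1}.ncard
    let y : ℕ → ℕ := fun τ =>
      {P : List (TEdge (Option V)) |
        IsPath (Eτ τ) (some s) none P ∧ P.length ≤ τ + 1}.ncard
    (∀ τ, 1 ≤ τ → τ ≤ n - 1 →
      y τ = ∑ ℓ ∈ Finset.Icc 1 τ, τ.choose ℓ * x ℓ) ∧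
    (∀ τ, 1 ≤ τ → τ ≤ n - 1 →
      x τ = y τ - ∑ i ∈ Finset.Icc 1 (τ - 1), τ.choose i * x i) ∧
    {p : List V | SIsPath Eg s t p}.ncard = ∑ ℓ ∈ Finset.Icc 1 (n - 1), x ℓ := by
  intro n Eτ x y
  have hn2 : 2 ≤ n := Fintype.one_lt_card_iff_nontrivial.mpr ⟨s, t, hst⟩
  have h1 : ∀ τ, 1 ≤ τ → τ ≤ n - 1 →
      y τ = ∑ ℓ ∈ Finset.Icc 1 τ, τ.choose ℓ * x ℓ := by
    intro τ ha hb
    exact main_count Eg s t hst n τ ha (by omega)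
  refine ⟨h1, ?_, static_count Eg s t hst⟩
  intro τ ha hb
  have hy := h1 τ ha hb
  obtain ⟨k, rfl⟩ : ∃ k, τ = k + 1 := ⟨τ - 1, by omega⟩
  rw [Finset.sum_Icc_succ_top (by omega : 1 ≤ k + 1)] at hy
  rw [Nat.choose_self, one_mul] at hy
  simp only [Nat.add_sub_cancel]
  omega
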